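/- For u > 0 and real numbers a, b, ∑_{n∈ℤ} e^{-2πi(n+a)b} e^{-πu(n+a)²} = u^{-1/2} ∑_{n∈ℤ} e^{2πina} e^{-π(n+b)²/u}. -/

import Mathlib

open Complex Real

theorem gaussian_poisson (u : ℝ) (hu : 0 < u) (a b : ℝ) :
    ∑' n : ℤ, Complex.exp (-(2 * π * I * (n + a) * b)) * Complex.exp (-(π * u * (n + a) ^ 2)) =
    (1 / Real.sqrt u : ℝ) *
      ∑' n : ℤ, Complex.exp (2 * π * I * n * a) * Complex.exp (-(π * (n + b) ^ 2 / u)) := by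
  have hu' : 0 < ((u : ℂ)).re := by simpa using hu
  set B : ℂ := -(I * b + u * a) with hB
  set C : ℂ := Complex.exp (-(π * u * a ^ 2) - 2 * π * I * a * b) with hC
  have key := Complex.tsum_exp_neg_quadratic hu' B
  have hsqrt : ((u : ℂ)) ^ (1 / 2 : ℂ) = (Real.sqrt u : ℂ) := by
    rw [Real.sqrt_eq_rpow, Complex.ofReal_cpow hu.le]
    norm_num
  have hL : ∀ n : ℤ,
      Complex.exp (-(2 * π * I * (n + a) * b)) * Complex.exp (-(π * u * (n + a) ^ 2)) =
      C * Complex.exp (-π * u * n ^ 2 + 2 * π * B * n) := by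
    intro n
    rw [hC, ← Complex.exp_add, ← Complex.exp_add]
    congr 1
    push_cast [hB]
    ring
  have hR : ∀ n : ℤ,
      C * Complex.exp (-π / u * (n + I * B) ^ 2) =
      Complex.exp (2 * π * I * n * a) * Complex.exp (-(π * (n + b) ^ 2 / u)) := by
    intro n
    rw [hC, ← Complex.exp_add, ← Complex.exp_add]
    congr 1
    have hI : (I : ℂ) ^ 2 = -1 := Complex.I_sq
    have hu0 : (u : ℂ) ≠ 0 := by exact_mod_cast hu.ne'
    field_simp [hB]
    ring_nf
    rw [hB]
    linear_combination (2 * (n:ℂ) * b - (u:ℂ)^2 * a^2 - (b:ℂ)^2 * (I^2 - 1) - 2 * (u:ℂ) * a * b * I) * hI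
  calc ∑' n : ℤ, Complex.exp (-(2 * π * I * (n + a) * b)) * Complex.exp (-(π * u * (n + a) ^ 2))
      = ∑' n : ℤ, C * Complex.exp (-π * u * n ^ 2 + 2 * π * B * n) := tsum_congr hL
    _ = C * ∑' n : ℤ, Complex.exp (-π * u * n ^ 2 + 2 * π * B * n) := tsum_mul_left
    _ = C * (1 / (u : ℂ) ^ (1 / 2 : ℂ) * ∑' n : ℤ, Complex.exp (-π / u * (n + I * B) ^ 2)) := by
        rw [key]
    _ = 1 / (u : ℂ) ^ (1 / 2 : ℂ) * ∑' n : ℤ, C * Complex.exp (-π / u * (n + I * B) ^ 2) := by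
        rw [tsum_mul_left]; ring
    _ = (1 / Real.sqrt u : ℝ) *
        ∑' n : ℤ, Complex.exp (2 * π * I * n * a) * Complex.exp (-(π * (n + b) ^ 2 / u)) := by
        rw [tsum_congr hR, hsqrt]
        push_cast
        ring
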